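/- The counting semantics satisfies Counter-Transitivity: if there is an injection δ from R^−(x) into R^−(y) such that v_α(δ(z)) ≥ v_α(z) for every z ∈ R^−(x), then v_α(x) ≥ v_α(y). -/

import Mathlib

/-- Counter-Transitivity for the counting semantics: if there is
an injection δ from the attackers of x into the attackers of y such that
v_α(δ(z)) ≥ v_α(z) for every attacker z of x, then v_α(x) ≥ v_α(y). -/
theorem counting_counter_transitivity (n : ℕ) [NeZero n]
    (R : Fin n → Fin n → Prop) [DecidableRel R]
    (α : ℝ) (hα : 0 < α) (hα1 : α < 1)
    (N : ℝ)
    (hN : N = Finset.univ.sup' Finset.univ_nonempty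
        (fun i => ((Finset.univ.filter (fun j => R j i)).card : ℝ)))
    (v : Fin n → ℝ)
    (hv : ∀ i, v i = 1 - (α / N) * ∑ j ∈ Finset.univ.filter (fun j => R j i), v j)
    (x y : Fin n) (δ : Fin n → Fin n)
    (hinj : Set.InjOn δ {z | R z x})
    (hmap : ∀ z, R z x → R (δ z) y)
    (hge : ∀ z, R z x → v z ≤ v (δ z)) :
    v y ≤ v x := by
  classical
  have hNcard : ∀ i : Fin n, ((Finset.univ.filter (fun j => R j i)).card : ℝ) ≤ N := by
    intro i; rw [hN]
    exact Finset.le_sup' (fun i => ((Finset.univ.filter (fun j => R j i)).card : ℝ))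
      (Finset.mem_univ i)
  have hN0 : 0 ≤ N := le_trans (Nat.cast_nonneg _) (hNcard (Classical.arbitrary _))
  have hcoef : 0 ≤ α / N := div_nonneg hα.le hN0
  -- nonnegativity of v
  have hvnonneg : ∀ i, 0 ≤ v i := by
    by_cases hNz : N = 0
    · intro i
      rw [hv i, hNz]
      simp
    · have hNpos : 0 < N := lt_of_le_of_ne hN0 (Ne.symm hNz)
      set m := Finset.univ.inf' Finset.univ_nonempty v with hm
      set M := Finset.univ.sup' Finset.univ_nonempty v with hM
      obtain ⟨i0, _, hi0⟩ := Finset.exists_mem_eq_inf' (Finset.univ_nonempty) v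
      obtain ⟨i1, _, hi1⟩ := Finset.exists_mem_eq_sup' (Finset.univ_nonempty) v
      have hmle : ∀ i, m ≤ v i := fun i => Finset.inf'_le v (Finset.mem_univ i)
      have hMge : ∀ i, v i ≤ M := fun i => Finset.le_sup' v (Finset.mem_univ i)
      -- M ≥ 0
      have hM0 : 0 ≤ M := by
        by_contra hMneg
        push_neg at hMneg
        have hsum : ∑ j ∈ Finset.univ.filter (fun j => R j i0), v j ≤ 0 := by
          apply Finset.sum_nonpos
          intro j _
          exact le_of_lt (lt_of_le_of_lt (hMge j) hMneg)
        have : (1 : ℝ) ≤ v i0 := by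
          rw [hv i0]
          nlinarith [mul_nonpos_of_nonneg_of_nonpos hcoef hsum]
        have := hMge i0
        linarith
      -- m ≥ 0
      intro i
      have hm0 : 0 ≤ m := by
        by_contra hmneg
        push_neg at hmneg
        -- bound on M
        have hcard1 : ((Finset.univ.filter (fun j => R j i1)).card : ℝ) ≤ N := hNcard i1
        have hsum1 : N * m ≤ ∑ j ∈ Finset.univ.filter (fun j => R j i1), v j := by
          have h1 : ((Finset.univ.filter (fun j => R j i1)).card : ℝ) * m ≤
              ∑ j ∈ Finset.univ.filter (fun j => R j i1), v j := by
            have := Finset.card_nsmul_le_sum (Finset.univ.filter (fun j => R j i1)) v m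
              (fun j _ => hmle j)
            simpa [nsmul_eq_mul] using this
          nlinarith
        have hMub : M ≤ 1 - α * m := by
          rw [hM, hi1, hv i1]
          have : (α / N) * (N * m) ≤ (α / N) * ∑ j ∈ Finset.univ.filter (fun j => R j i1), v j :=
            mul_le_mul_of_nonneg_left hsum1 hcoef
          have hrewrite : (α / N) * (N * m) = α * m := by
            field_simp
          linarith
        -- bound on m
        have hcard0 : ((Finset.univ.filter (fun j => R j i0)).card : ℝ) ≤ N := hNcard i0
        have hsum0 : ∑ j ∈ Finset.univ.filter (fun j => R j i0), v j ≤ N * M := by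
          have h1 : ∑ j ∈ Finset.univ.filter (fun j => R j i0), v j ≤
              ((Finset.univ.filter (fun j => R j i0)).card : ℝ) * M := by
            have := Finset.sum_le_card_nsmul (Finset.univ.filter (fun j => R j i0)) v M
              (fun j _ => hMge j)
            simpa [nsmul_eq_mul] using this
          nlinarith
        have hmlb : 1 - α * M ≤ m := by
          rw [hm, hi0, hv i0]
          have : (α / N) * ∑ j ∈ Finset.univ.filter (fun j => R j i0), v j ≤ (α / N) * (N * M) :=
            mul_le_mul_of_nonneg_left hsum0 hcoef
          have hrewrite : (α / N) * (N * M) = α * M := by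
            field_simp
          linarith
        nlinarith
      exact le_trans hm0 (hmle i)
  -- main argument
  have hsub : (Finset.univ.filter (fun z => R z x)).image δ ⊆ Finset.univ.filter (fun z => R z y) := by
    intro w hw
    obtain ⟨z, hz, rfl⟩ := Finset.mem_image.mp hw
    simp only [Finset.mem_filter, Finset.mem_univ, true_and] at hz ⊢
    exact hmap z hz
  have key : ∑ z ∈ Finset.univ.filter (fun z => R z x), v z ≤
      ∑ w ∈ Finset.univ.filter (fun z => R z y), v w := by
    calc ∑ z ∈ Finset.univ.filter (fun z => R z x), v z
        ≤ ∑ z ∈ Finset.univ.filter (fun z => R z x), v (δ z) := by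
          apply Finset.sum_le_sum
          intro z hz
          exact hge z (by simpa using (Finset.mem_filter.mp hz).2)
      _ = ∑ w ∈ (Finset.univ.filter (fun z => R z x)).image δ, v w := by
          rw [Finset.sum_image]
          intro a ha b hb hab
          exact hinj (by simpa using (Finset.mem_filter.mp ha).2)
            (by simpa using (Finset.mem_filter.mp hb).2) hab
      _ ≤ ∑ w ∈ Finset.univ.filter (fun z => R z y), v w :=
          Finset.sum_le_sum_of_subset_of_nonneg hsub (fun w _ _ => hvnonneg w)
  rw [hv x, hv y]
  have := mul_le_mul_of_nonneg_left key hcoef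
  linarith
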